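/- Let G be a finite simple graph, let k ≥ 4 be an integer, let β be an eigenvalue of the adjacency matrix of some subgraph of G, and let λ be a complex number with λ^k = β². Then λ is an eigenvalue of the k-power hypergraph G^(k). -/

import Mathlib

open Finset

/-- `(lam, x)` is an eigenpair of the `k`-uniform hypergraph with hyperedge set `E`:
`x` is nonzero and for every vertex `i`,
`lam * x i ^ (k-1) = ∑_{e ∈ E, i ∈ e} ∏_{v ∈ e \ {i}} x v`. -/
def IsHypergraphEigenpair {W : Type*} [Fintype W] [DecidableEq W]
    (k : ℕ) (E : Finset (Finset W)) (lam : ℂ) (x : W → ℂ) : Prop :=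
  x ≠ 0 ∧ ∀ i : W, lam * x i ^ (k - 1) =
    ∑ e ∈ E.filter (fun e => i ∈ e), ∏ v ∈ e.erase i, x v

/-- `lam` is an eigenvalue of the `k`-uniform hypergraph with hyperedge set `E`. -/
def IsHypergraphEigenvalue {W : Type*} [Fintype W] [DecidableEq W]
    (k : ℕ) (E : Finset (Finset W)) (lam : ℂ) : Prop :=
  ∃ x, IsHypergraphEigenpair k E lam x

/-- The hyperedge of the `k`-power hypergraph `G^(k)` corresponding to the edge `e` of `G`:
it consists of the two endpoints of `e` together with the `k - 2` added vertices on `e`. -/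
def powerEdge {V : Type*} [Fintype V] [DecidableEq V] (G : SimpleGraph V) [DecidableRel G.Adj]
    (k : ℕ) (e : G.edgeSet) : Finset (V ⊕ (G.edgeSet × Fin (k - 2))) :=
  Finset.univ.filter (fun v =>
    (∃ i, v = Sum.inl i ∧ i ∈ (e : Sym2 V)) ∨ ∃ t, v = Sum.inr (e, t))

/-- The hyperedge set of the `k`-power hypergraph `G^(k)`, whose vertices are the vertices of `G`
(`Sum.inl`) together with `k - 2` new vertices for each edge of `G` (`Sum.inr`). -/
def powerEdges {V : Type*} [Fintype V] [DecidableEq V] (G : SimpleGraph V) [DecidableRel G.Adj]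
    (k : ℕ) : Finset (Finset (V ⊕ (G.edgeSet × Fin (k - 2)))) :=
  Finset.univ.image (powerEdge G k)

section Helpers

variable {V : Type*} [Fintype V] [DecidableEq V] (G : SimpleGraph V) [DecidableRel G.Adj] (k : ℕ)

lemma mem_powerEdge_inl {a : V} {e : G.edgeSet} :
    (Sum.inl a : V ⊕ (G.edgeSet × Fin (k-2))) ∈ powerEdge G k e ↔ a ∈ (e : Sym2 V) := by
  simp [powerEdge]

lemma mem_powerEdge_inr {f e : G.edgeSet} {t : Fin (k-2)} :
    (Sum.inr (f, t) : V ⊕ (G.edgeSet × Fin (k-2))) ∈ powerEdge G k e ↔ f = e := by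
  simp [powerEdge, Prod.ext_iff]

lemma powerEdge_inj (hk : 4 ≤ k) {e f : G.edgeSet} (h : powerEdge G k e = powerEdge G k f) :
    e = f := by
  have t0 : Fin (k-2) := ⟨0, by omega⟩
  have : (Sum.inr (e, t0) : V ⊕ (G.edgeSet × Fin (k-2))) ∈ powerEdge G k f := by
    rw [← h, mem_powerEdge_inr]
  rwa [mem_powerEdge_inr] at this

lemma prod_powerEdge (x : V ⊕ (G.edgeSet × Fin (k-2)) → ℂ) (e : G.edgeSet) (u v : V)
    (huv : (e : Sym2 V) = s(u, v)) (hne : u ≠ v) :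
    ∏ w ∈ powerEdge G k e, x w
      = x (Sum.inl u) * x (Sum.inl v) * ∏ t : Fin (k-2), x (Sum.inr (e, t)) := by
  rw [powerEdge, Finset.prod_filter, Fintype.prod_sum_type]
  congr 1
  · have h1 : ∀ a : V, ((∃ i, (Sum.inl a : V ⊕ (G.edgeSet × Fin (k-2))) = Sum.inl i ∧ i ∈ (e : Sym2 V)) ∨
        ∃ t, (Sum.inl a : V ⊕ (G.edgeSet × Fin (k-2))) = Sum.inr (e, t)) ↔ a ∈ ({u, v} : Finset V) := by
      intro a
      simp [huv, Sym2.mem_iff]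
    calc ∏ a : V, (if (∃ i, (Sum.inl a : V ⊕ (G.edgeSet × Fin (k-2))) = Sum.inl i ∧ i ∈ (e : Sym2 V)) ∨
            ∃ t, (Sum.inl a : V ⊕ (G.edgeSet × Fin (k-2))) = Sum.inr (e, t) then x (Sum.inl a) else 1)
        = ∏ a : V, (if a ∈ ({u, v} : Finset V) then x (Sum.inl a) else 1) := by
          exact Finset.prod_congr rfl fun a _ => by rw [if_congr (h1 a) rfl rfl]
      _ = ∏ a ∈ ({u, v} : Finset V), x (Sum.inl a) := by
          rw [Finset.prod_ite_mem, Finset.univ_inter]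
      _ = x (Sum.inl u) * x (Sum.inl v) := Finset.prod_pair hne
  · rw [Fintype.prod_prod_type]
    have h2 : ∀ (f : G.edgeSet) (t : Fin (k-2)),
        ((∃ i, (Sum.inr (f,t) : V ⊕ (G.edgeSet × Fin (k-2))) = Sum.inl i ∧ i ∈ (e : Sym2 V)) ∨
        ∃ t', (Sum.inr (f,t) : V ⊕ (G.edgeSet × Fin (k-2))) = Sum.inr (e, t')) ↔ f = e := by
      intro f t; simp [Prod.ext_iff]
    calc ∏ f : G.edgeSet, ∏ t : Fin (k-2), (if _ ∨ _ then x (Sum.inr (f, t)) else 1)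
        = ∏ f : G.edgeSet, ∏ t : Fin (k-2), (if f = e then x (Sum.inr (f, t)) else 1) :=
          Finset.prod_congr rfl fun f _ => Finset.prod_congr rfl fun t _ => by
            rw [if_congr (h2 f t) rfl rfl]
      _ = ∏ f : G.edgeSet, (if f = e then ∏ t : Fin (k-2), x (Sum.inr (f, t)) else 1) :=
          Finset.prod_congr rfl fun f _ => by split_ifs <;> simp
      _ = ∏ t : Fin (k-2), x (Sum.inr (e, t)) := by rw [Finset.prod_ite_eq']; simp

lemma prod_fin_special (hk : 4 ≤ k) (a b : ℂ) :
    ∏ t : Fin (k-2), (if (t : ℕ) = 0 then a else b) = a * b ^ (k-3) := by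
  have h0 : (⟨0, by omega⟩ : Fin (k-2)) ∈ (univ : Finset (Fin (k-2))) := mem_univ _
  rw [← Finset.mul_prod_erase _ _ h0, if_pos rfl]
  congr 1
  have hb : ∀ t ∈ (univ : Finset (Fin (k-2))).erase ⟨0, by omega⟩,
      (if (t : ℕ) = 0 then a else b) = b := by
    intro t ht
    rw [if_neg fun h => (Finset.mem_erase.mp ht).1 (Fin.ext h)]
  rw [Finset.prod_congr rfl hb, Finset.prod_const, Finset.card_erase_of_mem h0,
    Finset.card_univ, Fintype.card_fin]
  congr 1

end Helpers

/-- **(Zhou et al.)** If `β` is an eigenvalue of the adjacency matrix of some subgraph of `G`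
(vertex set `S`, edge set `E' ⊆ E(G)` with edges inside `S`) and `lam^k = β²` with `k ≥ 4`,
then `lam` is an eigenvalue of the k-power hypergraph `G^(k)`. -/
theorem eigenvalue_of_subgraph_eigenvalue
    {V : Type*} [Fintype V] [DecidableEq V] (G : SimpleGraph V) [DecidableRel G.Adj]
    (k : ℕ) (hk : 4 ≤ k) (β lam : ℂ)
    (hβ : ∃ (S : Finset V) (E' : Finset (Sym2 V)),
      E' ⊆ G.edgeFinset ∧ (∀ e ∈ E', ∀ v ∈ e, v ∈ S) ∧
      ∃ y : ↥S → ℂ, y ≠ 0 ∧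
        Matrix.mulVec
          (Matrix.of fun i j : ↥S => if s((i : V), (j : V)) ∈ E' then (1 : ℂ) else 0) y
          = β • y)
    (hlam : lam ^ k = β ^ 2) :
    IsHypergraphEigenvalue k (powerEdges G k) lam := by
  classical
  obtain ⟨S, E', hE'sub, hE'S, y, hy, heig⟩ := hβ
  have hk0 : k ≠ 0 := by omega
  -- extend y to all of V
  obtain ⟨Y, hYmem, hYnot⟩ : ∃ Y : V → ℂ,
      (∀ u (h : u ∈ S), Y u = y ⟨u, h⟩) ∧ (∀ u, u ∉ S → Y u = 0) :=
    ⟨fun u => if h : u ∈ S then y ⟨u, h⟩ else 0, fun u h => dif_pos h, fun u h => dif_neg h⟩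
  have hYS : ∀ u, Y u ≠ 0 → u ∈ S := fun u h => by
    by_contra hu; exact h (hYnot u hu)
  -- k-th roots of Y u ^ 2
  obtain ⟨c, hc⟩ : ∃ c : V → ℂ, ∀ u, c u ^ k = Y u ^ 2 := by
    choose c hc using fun u => IsAlgClosed.exists_pow_nat_eq (Y u ^ 2) (by omega : 0 < k)
    exact ⟨c, hc⟩
  have hc0 : ∀ u, c u = 0 ↔ Y u = 0 := by
    intro u
    rw [← pow_eq_zero_iff hk0, hc u, pow_eq_zero_iff two_ne_zero]
  -- symmetric products over edges
  obtain ⟨Q, hQ⟩ : ∃ Q : Sym2 V → ℂ, ∀ a b, Q s(a, b) = Y a * Y b :=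
    ⟨Sym2.lift ⟨fun a b => Y a * Y b, fun a b => mul_comm _ _⟩, fun _ _ => rfl⟩
  obtain ⟨C2, hC2⟩ : ∃ C2 : Sym2 V → ℂ, ∀ a b, C2 s(a, b) = c a * c b :=
    ⟨Sym2.lift ⟨fun a b => c a * c b, fun a b => mul_comm _ _⟩, fun _ _ => rfl⟩
  -- k-th roots on edges
  obtain ⟨z, hz⟩ : ∃ z : G.edgeSet → ℂ,
      ∀ e, z e ^ k = if (e : Sym2 V) ∈ E' then Q e / β else 0 := by
    choose z hz using fun e : G.edgeSet =>
      IsAlgClosed.exists_pow_nat_eq (if (e : Sym2 V) ∈ E' then Q e / β else 0)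
        (by omega : 0 < k)
    exact ⟨z, hz⟩
  have hz0 : ∀ e : G.edgeSet, z e ≠ 0 → (e : Sym2 V) ∈ E' ∧ Q e ≠ 0 ∧ β ≠ 0 := by
    intro e hze
    have h1 : z e ^ k ≠ 0 := pow_ne_zero _ hze
    rw [hz e] at h1
    split_ifs at h1 with hE
    · rcases div_ne_zero_iff.mp h1 with ⟨h2, h3⟩
      exact ⟨hE, h2, h3⟩
    · exact absurd rfl h1
  obtain ⟨ω, hω⟩ : ∃ ω : G.edgeSet → ℂ,
      ∀ e, ω e = lam * z e ^ 2 / C2 e := ⟨_, fun _ => rfl⟩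
  obtain ⟨xr, hxr⟩ : ∃ xr : G.edgeSet × Fin (k - 2) → ℂ,
      ∀ p, xr p = if (p.2 : ℕ) = 0 then ω p.1 * z p.1 else z p.1 := ⟨_, fun _ => rfl⟩
  -- the matrix eigen-equation, in extended form
  have hmat : ∀ u, u ∈ S → ∑ v : V, (if s(u, v) ∈ E' then Y v else 0) = β * Y u := by
    intro u hu
    have h1 := congrFun heig ⟨u, hu⟩
    simp only [Matrix.mulVec, dotProduct, Matrix.of_apply, Pi.smul_apply,
      smul_eq_mul, ite_mul, one_mul, zero_mul] at h1
    calc ∑ v : V, (if s(u, v) ∈ E' then Y v else 0)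
        = ∑ v ∈ S, (if s(u, v) ∈ E' then Y v else 0) := by
          refine (Finset.sum_subset (Finset.subset_univ S) fun v _ hv => ?_).symm
          rw [if_neg fun hE => hv (hE'S _ hE v (Sym2.mem_mk_right u v))]
      _ = ∑ j : ↥S, (if s(u, (j : V)) ∈ E' then Y j else 0) := (Finset.sum_coe_sort _ _).symm
      _ = β * Y u := by
          rw [hYmem u hu]
          rw [← h1]
          exact Finset.sum_congr rfl fun j _ => by rw [hYmem j j.2]
  refine ⟨Sum.elim c xr, ?_, ?_⟩
  · -- nonzero
    obtain ⟨j, hj⟩ := Function.ne_iff.mp hy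
    intro h
    have h1 : c (j : V) = 0 := congrFun h (Sum.inl (j : V))
    rw [hc0, hYmem _ j.2] at h1
    exact hj (by simpa using h1)
  intro i
  rw [powerEdges, Finset.filter_image,
    Finset.sum_image fun e _ f _ h => powerEdge_inj G k hk h]
  obtain u | ⟨e, t⟩ := i
  · -- original vertex
    simp only [Sum.elim_inl]
    by_cases hu : Y u = 0
    · -- inactive vertex
      have hcu : c u = 0 := (hc0 u).mpr hu
      rw [hcu, zero_pow (by omega : k - 1 ≠ 0), mul_zero]
      refine (Finset.sum_eq_zero fun e he => ?_).symm
      have hue : u ∈ (e : Sym2 V) := by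
        have := (Finset.mem_filter.mp he).2
        rwa [mem_powerEdge_inl] at this
      have hze : z e = 0 := by
        by_contra hze
        obtain ⟨_, hQe, _⟩ := hz0 e hze
        obtain ⟨b, hb⟩ := Sym2.mem_iff_exists.mp hue
        rw [hb, hQ] at hQe
        exact hQe (by rw [hu, zero_mul])
      refine Finset.prod_eq_zero (i := Sum.inr (e, ⟨0, by omega⟩)) ?_ ?_
      · rw [Finset.mem_erase]
        exact ⟨by simp, (mem_powerEdge_inr G k).mpr rfl⟩
      · simp [hxr, hze]
    · -- active vertex
      have hu' : u ∈ S := hYS u hu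
      have hcu : c u ≠ 0 := fun h => hu ((hc0 u).mp h)
      have hsum := Finset.sum_bij
        (s := G.neighborFinset u)
        (t := Finset.univ.filter fun e : G.edgeSet =>
          (Sum.inl u : V ⊕ (G.edgeSet × Fin (k-2))) ∈ powerEdge G k e)
        (f := fun v => lam / (β * c u) * (Y u * if s(u, v) ∈ E' then Y v else 0))
        (g := fun e => ∏ w ∈ (powerEdge G k e).erase (Sum.inl u), Sum.elim c xr w)
        (i := fun v hv => (⟨s(u, v), (G.mem_neighborFinset u v).mp hv⟩ : G.edgeSet))
        (hi := fun v hv => by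
          rw [Finset.mem_filter]
          exact ⟨Finset.mem_univ _, (mem_powerEdge_inl G k).mpr (Sym2.mem_mk_left u v)⟩)
        (i_inj := fun a ha b hb h => Sym2.congr_right.mp (Subtype.ext_iff.mp h))
        (i_surj := fun e he => by
          have hue : u ∈ (e : Sym2 V) := by
            have := (Finset.mem_filter.mp he).2
            rwa [mem_powerEdge_inl] at this
          obtain ⟨b, hb⟩ := Sym2.mem_iff_exists.mp hue
          have hadj : G.Adj u b := G.mem_edgeSet.mp (hb ▸ e.2)
          exact ⟨b, (G.mem_neighborFinset u b).mpr hadj, Subtype.ext hb.symm⟩)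
        (h := fun v hv => ?_)
      · rw [← hsum]
        have hext : ∑ v ∈ G.neighborFinset u,
              (lam / (β * c u) * (Y u * if s(u, v) ∈ E' then Y v else 0))
            = ∑ v : V, (lam / (β * c u) * (Y u * if s(u, v) ∈ E' then Y v else 0)) := by
          refine Finset.sum_subset (Finset.subset_univ _) fun v _ hv => ?_
          have : s(u, v) ∉ E' := fun hE => hv ((G.mem_neighborFinset u v).mpr
            (G.mem_edgeSet.mp (SimpleGraph.mem_edgeFinset.mp (hE'sub hE))))
          rw [if_neg this, mul_zero, mul_zero]
        rw [hext, ← Finset.mul_sum, ← Finset.mul_sum, hmat u hu']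
        -- lam * c u ^ (k-1) = lam / (β * c u) * (Y u * (β * Y u))
        by_cases hβ0 : β = 0
        · have hlam0 : lam = 0 := by
            refine pow_eq_zero_iff hk0 |>.mp ?_
            rw [hlam, hβ0]; ring
          rw [hlam0]; ring
        · have hYu2 : Y u ^ 2 = c u ^ k := (hc u).symm
          have hck : c u ^ k = c u ^ (k - 1) * c u := by
            rw [← pow_succ]; congr 1; omega
          field_simp
          rw [hYu2, hck]
          ring
      · -- pointwise identity on each edge at u
        beta_reduce
        set e : G.edgeSet := ⟨s(u, v), (G.mem_neighborFinset u v).mp hv⟩ with he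
        have hne : u ≠ v := G.ne_of_adj ((G.mem_neighborFinset u v).mp hv)
        have hmem : (Sum.inl u : V ⊕ (G.edgeSet × Fin (k-2))) ∈ powerEdge G k e :=
          (mem_powerEdge_inl G k).mpr (Sym2.mem_mk_left u v)
        have hfull : ∏ w ∈ powerEdge G k e, Sum.elim c xr w
            = c u * c v * (ω e * z e * z e ^ (k - 3)) := by
          rw [prod_powerEdge G k _ e u v rfl hne]
          simp only [Sum.elim_inl, Sum.elim_inr]
          congr 1
          have hval : ∀ t : Fin (k - 2), xr (e, t) = if (t : ℕ) = 0 then ω e * z e else z e :=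
            fun t => hxr (e, t)
          rw [Finset.prod_congr rfl fun t _ => hval t, prod_fin_special k hk]
        refine mul_right_cancel₀ hcu ?_
        have herase : (∏ w ∈ (powerEdge G k e).erase (Sum.inl u), Sum.elim c xr w) * c u
            = ∏ w ∈ powerEdge G k e, Sum.elim c xr w :=
          Finset.prod_erase_mul _ _ hmem
        rw [herase, hfull]
        by_cases hze : z e = 0
        · rw [hze]
          by_cases hE : s(u, v) ∈ E'
          · by_cases hβ0 : β = 0
            · have hlam0 : lam = 0 := by
                refine pow_eq_zero_iff hk0 |>.mp ?_
                rw [hlam, hβ0]; ring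
              rw [hlam0]; ring
            · have hzk := hz e
              rw [hze, zero_pow hk0, if_pos (show (e : Sym2 V) ∈ E' from hE)] at hzk
              have hQe : Q (e : Sym2 V) = 0 := by
                field_simp at hzk
                simpa using hzk.symm
              have hYv : Y v = 0 := by
                have h2 : Y u * Y v = 0 := by
                  rw [← hQ u v, ← hQe]
                rcases mul_eq_zero.mp h2 with h | h
                · exact absurd h hu
                · exact h
              rw [if_pos hE, hYv]; ring
          · rw [if_neg hE]; ring
        · obtain ⟨hE, hQe, hβ0⟩ := hz0 e hze
          have hYuv : Y u * Y v ≠ 0 := by rwa [show Q (e : Sym2 V) = Y u * Y v from hQ u v] at hQe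
          have hYv : Y v ≠ 0 := fun h => hYuv (by rw [h, mul_zero])
          have hcv : c v ≠ 0 := fun h => hYv ((hc0 v).mp h)
          have hzk : z e ^ k = Y u * Y v / β := by
            rw [hz e, if_pos (show (e : Sym2 V) ∈ E' from hE),
              show Q (e : Sym2 V) = Y u * Y v from hQ u v]
          have hzz : z e ^ 2 * (z e * z e ^ (k - 3)) = z e ^ k := by
            rw [← pow_succ', ← pow_add]
            congr 1; omega
          have hωe : ω e = lam * z e ^ 2 / (c u * c v) := by
            rw [hω, show C2 (e : Sym2 V) = c u * c v from hC2 u v]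
          have hRHS : c u * c v * (ω e * z e * z e ^ (k - 3)) = lam * z e ^ k := by
            rw [hωe]
            field_simp
            rw [show lam * z e ^ 3 * z e ^ (k - 3)
              = lam * (z e ^ 2 * (z e * z e ^ (k - 3))) by ring, hzz]
          rw [hRHS, hzk, if_pos (show s(u, v) ∈ E' from hE)]
          field_simp
  · -- added vertex
    have hfil : (Finset.univ.filter fun f : G.edgeSet =>
        (Sum.inr (e, t) : V ⊕ (G.edgeSet × Fin (k-2))) ∈ powerEdge G k f) = {e} := by
      ext f
      simp [mem_powerEdge_inr, eq_comm]
    rw [hfil, Finset.sum_singleton]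
    obtain ⟨u, v, huv⟩ : ∃ u v, (e : Sym2 V) = s(u, v) := by
      induction (e : Sym2 V) using Sym2.ind with
      | _ u v => exact ⟨u, v, rfl⟩
    have hne : u ≠ v := G.ne_of_adj (G.mem_edgeSet.mp (huv ▸ e.2))
    simp only [Sum.elim_inr]
    by_cases hze : z e = 0
    · have hxt : xr (e, t) = 0 := by rw [hxr]; split_ifs <;> simp [hze]
      rw [hxt, zero_pow (by omega : k - 1 ≠ 0), mul_zero]
      obtain ⟨t', ht'⟩ := Fintype.exists_ne_of_one_lt_card
        (by simp only [Fintype.card_fin]; omega : 1 < Fintype.card (Fin (k-2))) t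
      refine (Finset.prod_eq_zero (i := Sum.inr (e, t')) ?_ ?_).symm
      · rw [Finset.mem_erase]
        refine ⟨?_, (mem_powerEdge_inr G k).mpr rfl⟩
        simp [Prod.ext_iff, ht']
      · simp only [Sum.elim_inr]
        rw [hxr]; split_ifs <;> simp [hze]
    · obtain ⟨hE, hQe, hβ0⟩ := hz0 e hze
      have hYuv : Y u * Y v ≠ 0 := by rwa [huv, hQ u v] at hQe
      have hYu : Y u ≠ 0 := fun h => hYuv (by rw [h, zero_mul])
      have hYv : Y v ≠ 0 := fun h => hYuv (by rw [h, mul_zero])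
      have hcu : c u ≠ 0 := fun h => hYu ((hc0 u).mp h)
      have hcv : c v ≠ 0 := fun h => hYv ((hc0 v).mp h)
      have hlam0 : lam ≠ 0 := fun h => by
        rw [h, zero_pow hk0] at hlam
        exact hβ0 (pow_eq_zero_iff two_ne_zero |>.mp hlam.symm)
      have hC2e : C2 (e : Sym2 V) = c u * c v := by rw [huv]; exact hC2 u v
      have hωe : ω e = lam * z e ^ 2 / (c u * c v) := by rw [hω, hC2e]
      have hω0 : ω e ≠ 0 := by
        rw [hωe]
        exact div_ne_zero (mul_ne_zero hlam0 (pow_ne_zero _ hze)) (mul_ne_zero hcu hcv)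
      have hxt0 : xr (e, t) ≠ 0 := by
        rw [hxr]; split_ifs
        · exact mul_ne_zero hω0 hze
        · exact hze
      have hzk : z e ^ k = Y u * Y v / β := by
        rw [hz e, if_pos (huv ▸ hE : (e : Sym2 V) ∈ E'), huv, hQ u v]
      have hzz : z e ^ 2 * (z e * z e ^ (k - 3)) = z e ^ k := by
        rw [← pow_succ', ← pow_add]
        congr 1; omega
      have hmem : (Sum.inr (e, t) : V ⊕ (G.edgeSet × Fin (k-2))) ∈ powerEdge G k e :=
        (mem_powerEdge_inr G k).mpr rfl
      refine mul_right_cancel₀ hxt0 ?_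
      have herase : (∏ w ∈ (powerEdge G k e).erase (Sum.inr (e, t)), Sum.elim c xr w) * xr (e, t)
          = ∏ w ∈ powerEdge G k e, Sum.elim c xr w :=
        Finset.prod_erase_mul _ _ hmem
      rw [herase]
      have hfull : ∏ w ∈ powerEdge G k e, Sum.elim c xr w
          = c u * c v * ((ω e * z e) * z e ^ (k - 3)) := by
        rw [prod_powerEdge G k _ e u v huv hne]
        simp only [Sum.elim_inl, Sum.elim_inr]
        congr 1
        have hval : ∀ t : Fin (k - 2), xr (e, t) = if (t : ℕ) = 0 then ω e * z e else z e :=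
          fun t => hxr (e, t)
        rw [Finset.prod_congr rfl fun t _ => hval t, prod_fin_special k hk]
      rw [hfull]
      have hRHS : c u * c v * ((ω e * z e) * z e ^ (k - 3)) = lam * z e ^ k := by
        rw [hωe]
        field_simp
        rw [show z e ^ 3 * z e ^ (k - 3)
          = z e ^ 2 * (z e * z e ^ (k - 3)) by ring, hzz]
      rw [hRHS]
      have hpow : lam * xr (e, t) ^ (k - 1) * xr (e, t) = lam * xr (e, t) ^ k := by
        rw [mul_assoc, ← pow_succ]
        congr 2; omega
      rw [hpow, hxr]
      split_ifs
      · -- t = 0 : xr = ω e * z e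
        have hωk : ω e ^ k = 1 := by
          have hck : (c u * c v) ^ k = (Y u * Y v) ^ 2 := by
            rw [mul_pow, hc, hc]; ring
          rw [hωe, div_pow, mul_pow, ← pow_mul, show 2 * k = k * 2 from mul_comm 2 k,
            pow_mul, hlam, hzk, hck]
          field_simp
        rw [mul_pow, hωk, one_mul]
      · rfl
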